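/- Let σ(x) = 1/(1+e^{−x}) be the logistic squasher, let K_n ∈ ℕ and let w, w̄ ∈ ℝ^{1+K_n(d+2)} be weight vectors of shallow networks f_{net,w}(x) = w₁,₀^{(1)} + Σ_{j=1}^{K_n} w₁,ⱼ^{(1)}·σ(Σ_{k=1}^d w_{j,k}^{(0)}·x^{(k)} + w_{j,0}^{(0)}). Let γ_n* ≥ 1 and assume |w̄₁,ⱼ^{(1)}| ≤ γ_n* for all j ∈ {1,…,K_n}. Then for any x ∈ [0,1]^d, the sum over all weight coordinates (k,j,l) of |∂f_{net,w}(x)/∂w_{k,j}^{(l)} − ∂f_{net,w̄}(x)/∂w_{k,j}^{(l)}|² is at most 4·(d+1)²·(γ_n*)²·‖w − w̄‖². -/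

import Mathlib

noncomputable section

abbrev Evec (d : ℕ) := EuclideanSpace ℝ (Fin d)

/-- The logistic squasher. -/
def logistic (x : ℝ) : ℝ := 1 / (1 + Real.exp (-x))

/-- Index type of the weights of a shallow network with `K` neurons in dimension `d`. -/
abbrev WIdx (d K : ℕ) := Fin (K + 1) ⊕ (Fin K × Fin d) ⊕ Fin K

/-- The weight space `ℝ^{1+K(d+2)}` with Euclidean norm. -/
abbrev WVec (d K : ℕ) := EuclideanSpace ℝ (WIdx d K)

/-- Outer weight `w₁,ₖ^{(1)}` (with `k = 0` the constant term). -/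
def outw {d K : ℕ} (w : WVec d K) (k : Fin (K + 1)) : ℝ := w (Sum.inl k)

/-- Inner weight `w_{j,i}^{(0)}`. -/
def inw {d K : ℕ} (w : WVec d K) (j : Fin K) (i : Fin d) : ℝ := w (Sum.inr (Sum.inl (j, i)))

/-- Inner bias `w_{j,0}^{(0)}`. -/
def inb {d K : ℕ} (w : WVec d K) (j : Fin K) : ℝ := w (Sum.inr (Sum.inr j))

/-- The shallow neural network with activation `σ` and weight vector `w`. -/
def fnet {d K : ℕ} (σ : ℝ → ℝ) (w : WVec d K) (x : Evec d) : ℝ :=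
  outw w 0 + ∑ j : Fin K, outw w j.succ * σ (∑ i : Fin d, inw w j i * x i + inb w j)

/-- The partial derivative of the network output with respect to the weight
coordinate `idx`, evaluated at weight vector `w` and input `x`. -/
def netPartial {d K : ℕ} (w : WVec d K) (x : Evec d) (idx : WIdx d K) : ℝ :=
  fderiv ℝ (fun v => fnet logistic v x) w (EuclideanSpace.single idx (1 : ℝ))

/-! ### Auxiliary analysis of the logistic function -/

/-- Derivative of the logistic squasher. -/
def sigd (x : ℝ) : ℝ := logistic x * (1 - logistic x)

lemma exp_pos' (x : ℝ) : (0:ℝ) < 1 + Real.exp (-x) := by positivity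

lemma hasDerivAt_logistic (x : ℝ) : HasDerivAt logistic (sigd x) x := by
  have h1 : HasDerivAt (fun y : ℝ => 1 + Real.exp (-y)) (-Real.exp (-x)) x := by
    simpa using ((Real.hasDerivAt_exp (-x)).comp x ((hasDerivAt_id x).neg)).const_add 1
  have h2 := h1.inv (by positivity)
  have e : logistic = (fun y : ℝ => 1 + Real.exp (-y))⁻¹ := by ext y; simp [logistic, one_div]
  rw [e]
  refine h2.congr_deriv ?_
  · have hp := exp_pos' x
    simp only [sigd, logistic]
    field_simp
    ring

lemma logistic_mem (x : ℝ) : 0 < logistic x ∧ logistic x < 1 := by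
  have hp := exp_pos' x
  have he := Real.exp_pos (-x)
  constructor
  · rw [logistic]; positivity
  · rw [logistic, div_lt_one hp]; linarith

lemma sigd_bound (x : ℝ) : |sigd x| ≤ 1/4 := by
  obtain ⟨h0, h1⟩ := logistic_mem x
  rw [sigd, abs_le]
  constructor
  · nlinarith
  · nlinarith [sq_nonneg (logistic x - 1/2)]

lemma hasDerivAt_sigd (x : ℝ) :
    HasDerivAt sigd (sigd x * (1 - 2 * logistic x)) x := by
  have h := (hasDerivAt_logistic x).mul ((hasDerivAt_logistic x).const_sub 1)
  refine HasDerivAt.congr_deriv (f := sigd) h ?_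
  ring

lemma lipschitz_aux {f f' : ℝ → ℝ} (hd : ∀ x, HasDerivAt f (f' x) x)
    (hb : ∀ x, |f' x| ≤ 1/4) (a b : ℝ) : |f a - f b| ≤ (1/4) * |a - b| := by
  have : LipschitzWith (1/4 : NNReal) f := by
    apply lipschitzWith_of_nnnorm_deriv_le (fun x => (hd x).differentiableAt)
    intro x
    rw [(hd x).deriv]
    rw [← NNReal.coe_le_coe, coe_nnnorm, Real.norm_eq_abs]
    push_cast
    linarith [hb x]
  have := this.dist_le_mul a b
  simpa [Real.dist_eq, NNReal.coe_div] using this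

lemma logistic_lip (a b : ℝ) : |logistic a - logistic b| ≤ (1/4) * |a - b| :=
  lipschitz_aux hasDerivAt_logistic sigd_bound a b

lemma sigd_lip (a b : ℝ) : |sigd a - sigd b| ≤ (1/4) * |a - b| := by
  apply lipschitz_aux hasDerivAt_sigd _ a b
  intro x
  obtain ⟨h0, h1⟩ := logistic_mem x
  have := sigd_bound x
  rw [abs_mul]
  calc |sigd x| * |1 - 2 * logistic x| ≤ (1/4) * 1 := by
        apply mul_le_mul this _ (abs_nonneg _) (by norm_num)
        rw [abs_le]; constructor <;> linarith
    _ = 1/4 := by ring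

/-! ### Explicit form of the partial derivatives -/

variable {d K : ℕ}

/-- Coordinate projection as a continuous linear map. -/
def pj (d K : ℕ) (idx : WIdx d K) : WVec d K →L[ℝ] ℝ := EuclideanSpace.proj idx

/-- The (linear) inner activation of neuron `j`. -/
def Zmap (d K : ℕ) (x : Evec d) (j : Fin K) : WVec d K →L[ℝ] ℝ :=
  (∑ i : Fin d, x i • pj d K (Sum.inr (Sum.inl (j, i)))) + pj d K (Sum.inr (Sum.inr j))

lemma Zmap_apply (x : Evec d) (j : Fin K) (v : WVec d K) :
    Zmap d K x j v = ∑ i : Fin d, inw v j i * x i + inb v j := by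
  simp [Zmap, pj, inw, inb, mul_comm]

/-- The total derivative of the network in the weights. -/
def Dmap (d K : ℕ) (x : Evec d) (w : WVec d K) : WVec d K →L[ℝ] ℝ :=
  pj d K (Sum.inl 0) + ∑ j : Fin K,
    (logistic (Zmap d K x j w) • pj d K (Sum.inl j.succ)
      + (outw w j.succ * sigd (Zmap d K x j w)) • Zmap d K x j)

lemma hasFDerivAt_fnet (x : Evec d) (w : WVec d K) :
    HasFDerivAt (fun v => fnet logistic v x) (Dmap d K x w) w := by
  have heq : (fun v : WVec d K => fnet logistic v x)
      = fun v => pj d K (Sum.inl 0) v + ∑ j : Fin K,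
          pj d K (Sum.inl j.succ) v * logistic (Zmap d K x j v) := by
    ext v
    simp [fnet, outw, pj, Zmap_apply]
  rw [heq]
  apply HasFDerivAt.add ((pj d K (Sum.inl 0)).hasFDerivAt)
  have h := HasFDerivAt.sum (fun j (_ : j ∈ Finset.univ) =>
    ((pj d K (Sum.inl (Fin.succ j))).hasFDerivAt.mul
      ((hasDerivAt_logistic (Zmap d K x j w)).comp_hasFDerivAt w
        (Zmap d K x j).hasFDerivAt)))
  convert h using 1
  ext v
  simp [outw, pj, smul_smul]
  exact Finset.sum_congr rfl fun j _ => by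
    refine (add_comm _ _).trans ?_; simp [outw, pj, smul_smul, Function.comp_def]

lemma netPartial_eq (x : Evec d) (w : WVec d K) (idx : WIdx d K) :
    netPartial w x idx = Dmap d K x w (EuclideanSpace.single idx (1 : ℝ)) := by
  rw [netPartial, (hasFDerivAt_fnet x w).fderiv]

/-- The inner activation value of neuron `j`. -/
def zval {d K : ℕ} (x : Evec d) (w : WVec d K) (j : Fin K) : ℝ :=
  ∑ i : Fin d, inw w j i * x i + inb w j

lemma zval_eq (x : Evec d) (w : WVec d K) (j : Fin K) : Zmap d K x j w = zval x w j :=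
  Zmap_apply x j w

lemma Zmap_single_out (x : Evec d) (j : Fin K) (k : Fin (K+1)) :
    Zmap d K x j (EuclideanSpace.single (Sum.inl k) (1:ℝ)) = 0 := by
  simp [Zmap, pj, EuclideanSpace.single_apply]

lemma Zmap_single_in (x : Evec d) (j j' : Fin K) (i : Fin d) :
    Zmap d K x j (EuclideanSpace.single (Sum.inr (Sum.inl (j', i))) (1:ℝ))
      = if j = j' then x i else 0 := by
  simp [Zmap, pj, EuclideanSpace.single_apply, Prod.ext_iff, ite_and, eq_comm,
    Finset.sum_ite_eq, Finset.sum_ite_eq']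

lemma Zmap_single_bias (x : Evec d) (j j' : Fin K) :
    Zmap d K x j (EuclideanSpace.single (Sum.inr (Sum.inr j')) (1:ℝ))
      = if j = j' then 1 else 0 := by
  simp [Zmap, pj, EuclideanSpace.single_apply, eq_comm]

lemma netPartial_out0 (x : Evec d) (w : WVec d K) :
    netPartial w x (Sum.inl 0) = 1 := by
  rw [netPartial_eq]
  simp only [Dmap, ContinuousLinearMap.add_apply, ContinuousLinearMap.sum_apply,
    ContinuousLinearMap.smul_apply, smul_eq_mul, Zmap_single_out, Zmap_single_in,
    Zmap_single_bias]
  simp only [zval_eq]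
  simp [pj, EuclideanSpace.single_apply, Fin.succ_ne_zero, eq_comm]

lemma netPartial_out (x : Evec d) (w : WVec d K) (j : Fin K) :
    netPartial w x (Sum.inl j.succ) = logistic (zval x w j) := by
  rw [netPartial_eq]
  simp only [Dmap, ContinuousLinearMap.add_apply, ContinuousLinearMap.sum_apply,
    ContinuousLinearMap.smul_apply, smul_eq_mul, Zmap_single_out, Zmap_single_in,
    Zmap_single_bias]
  simp only [zval_eq]
  simp [pj, EuclideanSpace.single_apply, Fin.succ_ne_zero, Fin.succ_inj,
    Finset.sum_ite_eq, eq_comm]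

lemma netPartial_in (x : Evec d) (w : WVec d K) (j : Fin K) (i : Fin d) :
    netPartial w x (Sum.inr (Sum.inl (j, i)))
      = outw w j.succ * sigd (zval x w j) * x i := by
  rw [netPartial_eq]
  simp only [Dmap, ContinuousLinearMap.add_apply, ContinuousLinearMap.sum_apply,
    ContinuousLinearMap.smul_apply, smul_eq_mul, Zmap_single_out, Zmap_single_in,
    Zmap_single_bias]
  simp only [zval_eq]
  simp [pj, EuclideanSpace.single_apply, Finset.sum_ite_eq, eq_comm, mul_ite]

lemma netPartial_bias (x : Evec d) (w : WVec d K) (j : Fin K) :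
    netPartial w x (Sum.inr (Sum.inr j)) = outw w j.succ * sigd (zval x w j) := by
  rw [netPartial_eq]
  simp only [Dmap, ContinuousLinearMap.add_apply, ContinuousLinearMap.sum_apply,
    ContinuousLinearMap.smul_apply, smul_eq_mul, Zmap_single_out, Zmap_single_in,
    Zmap_single_bias]
  simp only [zval_eq]
  simp [pj, EuclideanSpace.single_apply, Finset.sum_ite_eq, eq_comm, mul_ite]

/-! ### The per-neuron estimate -/

set_option maxHeartbeats 2000000 in
lemma neuron_bound (D γ a ab z zb P : ℝ) (hD : 1 ≤ D) (hγ : 1 ≤ γ)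
    (hab : |ab| ≤ γ) (hP : 0 ≤ P) (hz2 : (z - zb)^2 ≤ 2 * D * P) :
    (logistic z - logistic zb)^2 + D * (a * sigd z - ab * sigd zb)^2
      ≤ 4 * D^2 * γ^2 * ((a - ab)^2 + P) := by
  have h1 : (logistic z - logistic zb)^2 ≤ (1/16) * (z - zb)^2 := by
    have := logistic_lip z zb
    have h := abs_nonneg (z - zb)
    nlinarith [sq_abs (logistic z - logistic zb), sq_abs (z - zb),
      abs_nonneg (logistic z - logistic zb)]
  have h2 : |a * sigd z - ab * sigd zb| ≤ (1/4) * |a - ab| + (γ/4) * |z - zb| := by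
    have e : a * sigd z - ab * sigd zb = (a - ab) * sigd z + ab * (sigd z - sigd zb) := by
      ring
    rw [e]
    calc |(a - ab) * sigd z + ab * (sigd z - sigd zb)|
        ≤ |(a - ab) * sigd z| + |ab * (sigd z - sigd zb)| := abs_add_le _ _
      _ = |a - ab| * |sigd z| + |ab| * |sigd z - sigd zb| := by rw [abs_mul, abs_mul]
      _ ≤ |a - ab| * (1/4) + γ * ((1/4) * |z - zb|) := by
          have b1 := sigd_bound z
          have b2 := sigd_lip z zb
          have := abs_nonneg (a - ab)
          have := abs_nonneg ab
          have := abs_nonneg (sigd z - sigd zb)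
          have := abs_nonneg (z - zb)
          have hγ0 : (0:ℝ) ≤ γ := by linarith
          nlinarith [mul_le_mul_of_nonneg_left b2 (le_trans (abs_nonneg ab) hab)]
      _ = (1/4) * |a - ab| + (γ/4) * |z - zb| := by ring
  have h3 : (a * sigd z - ab * sigd zb)^2 ≤ ((1/4) * |a - ab| + (γ/4) * |z - zb|)^2 := by
    have := abs_nonneg (a * sigd z - ab * sigd zb)
    nlinarith [sq_abs (a * sigd z - ab * sigd zb)]
  have hγ2 : 1 ≤ γ^2 := by nlinarith
  have hγγ : γ ≤ γ^2 := by nlinarith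
  have hD0 : (0:ℝ) ≤ D := by linarith
  have hD2 : D ≤ D^2 := by nlinarith
  have h4 : (a * sigd z - ab * sigd zb)^2 ≤ γ^2/8 * ((a - ab)^2 + (z - zb)^2) := by
    have hγ0 : (0:ℝ) ≤ γ := by linarith
    nlinarith [h3, sq_abs (a - ab), sq_abs (z - zb),
      mul_nonneg hγ0 (sq_nonneg (|a - ab| - |z - zb|)),
      sq_nonneg (a - ab), sq_nonneg (z - zb)]
  have hγq : (0:ℝ) ≤ γ^2 := by positivity
  have step1 : D * (a * sigd z - ab * sigd zb)^2
      ≤ D * (γ^2/8 * ((a - ab)^2 + (z - zb)^2)) := mul_le_mul_of_nonneg_left h4 hD0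
  have hq : D^2 ≤ D^2 * γ^2 := by
    have := mul_le_mul_of_nonneg_left hγ2 (sq_nonneg D)
    linarith
  have h7 : D * P ≤ D^2 * γ^2 * P :=
    (mul_le_mul_of_nonneg_right hD2 hP).trans (mul_le_mul_of_nonneg_right hq hP)
  set A := (a - ab)^2 with hAdef
  set Z := (z - zb)^2 with hZdef
  have hA : (0:ℝ) ≤ A := sq_nonneg _
  have hZ : (0:ℝ) ≤ Z := sq_nonneg _
  calc (logistic z - logistic zb)^2 + D * (a * sigd z - ab * sigd zb)^2
      ≤ (1/16) * Z + D * (γ^2/8 * (A + Z)) := add_le_add h1 step1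
    _ = γ^2/8 * D * A + (1/16 + γ^2/8 * D) * Z := by ring
    _ ≤ γ^2/8 * D * A + (1/16 + γ^2/8 * D) * (2 * D * P) := by
        have hc : (0:ℝ) ≤ 1/16 + γ^2/8 * D := by positivity
        exact add_le_add_right (mul_le_mul_of_nonneg_left hz2 hc) _
    _ ≤ 4 * D^2 * γ^2 * (A + P) := by
        nlinarith [h7, mul_le_mul_of_nonneg_left (mul_le_mul_of_nonneg_right hD2 hA) hγq,
          mul_nonneg (mul_nonneg (mul_nonneg hD0 hD0) hγq) hP,
          mul_nonneg (mul_nonneg (mul_nonneg hD0 hD0) hγq) hA]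

/-! ### Assembly -/

lemma sum_widx (f : WIdx d K → ℝ) :
    ∑ idx : WIdx d K, f idx
      = f (Sum.inl 0) + ∑ j : Fin K, f (Sum.inl j.succ)
        + (∑ j : Fin K, ∑ i : Fin d, f (Sum.inr (Sum.inl (j, i)))
        + ∑ j : Fin K, f (Sum.inr (Sum.inr j))) := by
  rw [Fintype.sum_sum_type, Fintype.sum_sum_type, Fin.sum_univ_succ, Fintype.sum_prod_type]

lemma norm_sq_eq (v : WVec d K) : ‖v‖^2 = ∑ idx : WIdx d K, (v idx)^2 := by
  rw [EuclideanSpace.norm_eq, Real.sq_sqrt (by positivity)]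
  simp [sq_abs]

/-- Lemma 7: Lipschitz property of the gradient of a shallow logistic
network with respect to the weights. -/
theorem statement10 (d K : ℕ) (γ : ℝ) (hγ : 1 ≤ γ)
    (w wb : WVec d K) (hwb : ∀ j : Fin K, |outw wb j.succ| ≤ γ)
    (x : Evec d) (hx : ∀ i, x i ∈ Set.Icc (0 : ℝ) 1) :
    ∑ idx : WIdx d K, (netPartial w x idx - netPartial wb x idx) ^ 2
      ≤ 4 * (d + 1) ^ 2 * γ ^ 2 * ‖w - wb‖ ^ 2 := by
  set D : ℝ := (d : ℝ) + 1 with hDdef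
  have hD : (1:ℝ) ≤ D := by simp [hDdef]
  have hD0 : (0:ℝ) ≤ D := by linarith
  have hγ0 : (0:ℝ) ≤ γ := by linarith
  -- abbreviations
  set P : Fin K → ℝ := fun j =>
    ∑ i : Fin d, (inw w j i - inw wb j i)^2 + (inb w j - inb wb j)^2 with hPdef
  have hPnn : ∀ j, 0 ≤ P j := fun j => by
    apply add_nonneg (Finset.sum_nonneg fun i _ => sq_nonneg _) (sq_nonneg _)
  have hz2 : ∀ j, (zval x w j - zval x wb j)^2 ≤ 2 * D * P j := by
    intro j
    have hzdiff : zval x w j - zval x wb j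
        = ∑ i : Fin d, (inw w j i - inw wb j i) * x i + (inb w j - inb wb j) := by
      simp [zval, Finset.sum_sub_distrib, sub_mul]
      ring
    rw [hzdiff]
    show _ ≤ 2 * ((d:ℝ) + 1) *
      (∑ i : Fin d, (inw w j i - inw wb j i)^2 + (inb w j - inb wb j)^2)
    have hu : (∑ i : Fin d, (inw w j i - inw wb j i) * x i)^2
        ≤ (d : ℝ) * ∑ i : Fin d, (inw w j i - inw wb j i)^2 := by
      calc (∑ i : Fin d, (inw w j i - inw wb j i) * x i)^2
          ≤ (Finset.univ.card : ℝ) * ∑ i : Fin d, ((inw w j i - inw wb j i) * x i)^2 := by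
            exact_mod_cast sq_sum_le_card_mul_sum_sq
              (s := (Finset.univ : Finset (Fin d)))
              (f := fun i => (inw w j i - inw wb j i) * x i)
        _ ≤ (d : ℝ) * ∑ i : Fin d, (inw w j i - inw wb j i)^2 := by
            rw [Finset.card_univ, Fintype.card_fin]
            apply mul_le_mul_of_nonneg_left _ (Nat.cast_nonneg d)
            apply Finset.sum_le_sum
            intro i _
            obtain ⟨h0, h1⟩ := hx i
            rw [mul_pow]
            have hx2 : x i ^ 2 ≤ 1 := by nlinarith
            calc (inw w j i - inw wb j i)^2 * x i ^ 2
                ≤ (inw w j i - inw wb j i)^2 * 1 :=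
                  mul_le_mul_of_nonneg_left hx2 (sq_nonneg _)
              _ = (inw w j i - inw wb j i)^2 := mul_one _
    nlinarith [hu, sq_nonneg (inb w j - inb wb j),
      sq_nonneg (∑ i : Fin d, (inw w j i - inw wb j i) * x i - (inb w j - inb wb j)),
      Finset.sum_nonneg (fun i (_ : i ∈ Finset.univ) => sq_nonneg (inw w j i - inw wb j i)),
      mul_nonneg (Nat.cast_nonneg (α := ℝ) d) (sq_nonneg (inb w j - inb wb j)),
      mul_nonneg (Nat.cast_nonneg (α := ℝ) d) (Finset.sum_nonneg
        (fun i (_ : i ∈ Finset.univ) => sq_nonneg (inw w j i - inw wb j i)))]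
  -- rewrite LHS
  rw [sum_widx]
  rw [netPartial_out0, netPartial_out0]
  simp only [netPartial_out, netPartial_in, netPartial_bias]
  have key : ∀ j : Fin K,
      (logistic (zval x w j) - logistic (zval x wb j))^2
      + (∑ i : Fin d, (outw w j.succ * sigd (zval x w j) * x i
          - outw wb j.succ * sigd (zval x wb j) * x i)^2
        + (outw w j.succ * sigd (zval x w j) - outw wb j.succ * sigd (zval x wb j))^2)
      ≤ 4 * D^2 * γ^2 * ((outw w j.succ - outw wb j.succ)^2 + P j) := by
    intro j
    have hbd := neuron_bound D γ (outw w j.succ) (outw wb j.succ)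
      (zval x w j) (zval x wb j) (P j) hD hγ (hwb j) (hPnn j) (hz2 j)
    refine le_trans ?_ hbd
    have hxi : ∀ i : Fin d,
        (outw w j.succ * sigd (zval x w j) * x i
          - outw wb j.succ * sigd (zval x wb j) * x i)^2
        ≤ (outw w j.succ * sigd (zval x w j) - outw wb j.succ * sigd (zval x wb j))^2 := by
      intro i
      obtain ⟨h0, h1⟩ := hx i
      have : (outw w j.succ * sigd (zval x w j) * x i
          - outw wb j.succ * sigd (zval x wb j) * x i)
          = (outw w j.succ * sigd (zval x w j)
              - outw wb j.succ * sigd (zval x wb j)) * x i := by ring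
      rw [this, mul_pow]
      have hx2 : x i ^ 2 ≤ 1 := by nlinarith
      calc _ ≤ (outw w j.succ * sigd (zval x w j)
            - outw wb j.succ * sigd (zval x wb j))^2 * 1 :=
            mul_le_mul_of_nonneg_left hx2 (sq_nonneg _)
        _ = _ := mul_one _
    have hsum : ∑ i : Fin d, (outw w j.succ * sigd (zval x w j) * x i
          - outw wb j.succ * sigd (zval x wb j) * x i)^2
        ≤ (d : ℝ) * (outw w j.succ * sigd (zval x w j)
            - outw wb j.succ * sigd (zval x wb j))^2 := by
      calc _ ≤ ∑ _i : Fin d, (outw w j.succ * sigd (zval x w j)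
            - outw wb j.succ * sigd (zval x wb j))^2 := Finset.sum_le_sum fun i _ => hxi i
        _ = (d : ℝ) * _ := by rw [Finset.sum_const, Finset.card_univ, Fintype.card_fin,
            nsmul_eq_mul]
    have : D * (outw w j.succ * sigd (zval x w j)
        - outw wb j.succ * sigd (zval x wb j))^2
        = (d : ℝ) * (outw w j.succ * sigd (zval x w j)
            - outw wb j.succ * sigd (zval x wb j))^2
          + (outw w j.succ * sigd (zval x w j)
            - outw wb j.succ * sigd (zval x wb j))^2 := by
      rw [hDdef]; ring
    linarith [hsum]
  -- sum up
  have hsumkey : ∑ j : Fin K, ((logistic (zval x w j) - logistic (zval x wb j))^2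
      + (∑ i : Fin d, (outw w j.succ * sigd (zval x w j) * x i
          - outw wb j.succ * sigd (zval x wb j) * x i)^2
        + (outw w j.succ * sigd (zval x w j) - outw wb j.succ * sigd (zval x wb j))^2))
      ≤ ∑ j : Fin K, 4 * D^2 * γ^2 * ((outw w j.succ - outw wb j.succ)^2 + P j) :=
    Finset.sum_le_sum fun j _ => key j
  have hnorm : ∑ j : Fin K, ((outw w j.succ - outw wb j.succ)^2 + P j) ≤ ‖w - wb‖^2 := by
    rw [norm_sq_eq, sum_widx]
    have hw : ∀ idx : WIdx d K, (w - wb) idx = w idx - wb idx := fun idx => rfl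
    simp only [hw, hPdef, outw, inw, inb]
    rw [Finset.sum_add_distrib, Finset.sum_add_distrib]
    linarith [sq_nonneg (w (Sum.inl (0 : Fin (K+1))) - wb (Sum.inl (0 : Fin (K+1))))]
  have hfac : (0:ℝ) ≤ 4 * D^2 * γ^2 := by positivity
  calc ((1:ℝ) - 1)^2 + ∑ j : Fin K,
        (logistic (zval x w j) - logistic (zval x wb j))^2
      + (∑ j : Fin K, ∑ i : Fin d, (outw w j.succ * sigd (zval x w j) * x i
          - outw wb j.succ * sigd (zval x wb j) * x i)^2
        + ∑ j : Fin K, (outw w j.succ * sigd (zval x w j)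
          - outw wb j.succ * sigd (zval x wb j))^2)
      = ∑ j : Fin K, ((logistic (zval x w j) - logistic (zval x wb j))^2
        + (∑ i : Fin d, (outw w j.succ * sigd (zval x w j) * x i
            - outw wb j.succ * sigd (zval x wb j) * x i)^2
          + (outw w j.succ * sigd (zval x w j)
            - outw wb j.succ * sigd (zval x wb j))^2)) := by
        rw [Finset.sum_add_distrib, Finset.sum_add_distrib]
        ring
    _ ≤ ∑ j : Fin K, 4 * D^2 * γ^2 * ((outw w j.succ - outw wb j.succ)^2 + P j) := hsumkey
    _ = 4 * D^2 * γ^2 * ∑ j : Fin K, ((outw w j.succ - outw wb j.succ)^2 + P j) := by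
        rw [Finset.mul_sum]
    _ ≤ 4 * D^2 * γ^2 * ‖w - wb‖^2 :=
        mul_le_mul_of_nonneg_left hnorm hfac
    _ = 4 * ((d:ℝ) + 1)^2 * γ^2 * ‖w - wb‖^2 := by rw [hDdef]

end
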